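/- For the triangular map built from the logistic map, the product of the arcsine densities is an invariant density: with f₀(x) = 4x(1-x), f₁(x) = (2x-1)², g₀(x) = (1-√(1-x))/2, g₁(x) = (1+√x)/2 and ζ(x) = 1/(π√(x(1-x))), the function ρ(x,y) = ζ(x) ζ(y) satisfies, for a.e. (x,y) ∈ (0,1)²: ρ(x,y) = g₀'(x) f₀'(y) ρ(g₀(x), f₀(y)) when 0 < y < 1/2, and ρ(x,y) = g₁'(x) f₁'(y) ρ(g₁(x), f₁(y)) when 1/2 ≤ y < 1. -/

import Mathlib

set_option maxHeartbeats 2000000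


open Set MeasureTheory

/-- For the triangular map built from the logistic map
`f₀(x) = 4x(1-x)`, `f₁(x) = (2x-1)²`, with inverse branches
`g₀(x) = (1-√(1-x))/2`, `g₁(x) = (1+√x)/2`, the product of the arcsine densities
`ρ(x,y) = ζ(x) ζ(y)`, `ζ(x) = 1/(π√(x(1-x)))`, is an invariant density:
it satisfies the Perron–Frobenius equation a.e. on `(0,1)²`. -/
theorem logistic_product_arcsine_invariant
    (f₀ f₁ g₀ g₁ ζ : ℝ → ℝ)
    (hf₀ : ∀ x, f₀ x = 4 * x * (1 - x))
    (hf₁ : ∀ x, f₁ x = (2 * x - 1) ^ 2)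
    (hg₀ : ∀ x, g₀ x = (1 - Real.sqrt (1 - x)) / 2)
    (hg₁ : ∀ x, g₁ x = (1 + Real.sqrt x) / 2)
    (hζ : ∀ x, ζ x = 1 / (Real.pi * Real.sqrt (x * (1 - x))))
    (ρ : ℝ × ℝ → ℝ)
    (hρ : ∀ p : ℝ × ℝ, ρ p = ζ p.1 * ζ p.2) :
    ∀ᵐ p ∂(volume.restrict (Ioo (0:ℝ) 1 ×ˢ Ioo (0:ℝ) 1)),
      (p.2 < 1/2 → ρ p = deriv g₀ p.1 * deriv f₀ p.2 * ρ (g₀ p.1, f₀ p.2)) ∧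
      (1/2 ≤ p.2 → ρ p = deriv g₁ p.1 * deriv f₁ p.2 * ρ (g₁ p.1, f₁ p.2)) := by
  have hF₀ : f₀ = fun x => 4 * x * (1 - x) := funext hf₀
  have hF₁ : f₁ = fun x => (2 * x - 1) ^ 2 := funext hf₁
  have hG₀ : g₀ = fun x => (1 - Real.sqrt (1 - x)) / 2 := funext hg₀
  have hG₁ : g₁ = fun x => (1 + Real.sqrt x) / 2 := funext hg₁
  -- the line y = 1/2 is null in the restricted measure
  have hnull : (volume.restrict (Ioo (0:ℝ) 1 ×ˢ Ioo (0:ℝ) 1))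
      {p : ℝ × ℝ | p.2 = 1/2} = 0 := by
    have hm : MeasurableSet {p : ℝ × ℝ | p.2 = 1/2} :=
      (measurableSet_singleton (1/2)).preimage measurable_snd
    rw [Measure.restrict_apply hm]
    have hsub2 : {p : ℝ × ℝ | p.2 = 1/2} ∩ Ioo 0 1 ×ˢ Ioo 0 1 ⊆
        (Ioo (0:ℝ) 1) ×ˢ ({1/2} : Set ℝ) := fun p hp => ⟨hp.2.1, hp.1⟩
    refine measure_mono_null hsub2 ?_
    rw [Measure.volume_eq_prod, Measure.prod_prod]
    simp
  have hae : ∀ᵐ p ∂(volume.restrict (Ioo (0:ℝ) 1 ×ˢ Ioo (0:ℝ) 1)),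
      p.2 ≠ 1/2 := by
    rw [MeasureTheory.ae_iff]
    simpa using hnull
  filter_upwards [ae_restrict_mem (measurableSet_Ioo.prod measurableSet_Ioo), hae]
    with p hp hne
  obtain ⟨x, y⟩ := p
  obtain ⟨hx, hy⟩ := Set.mem_prod.1 hp
  simp only at hx hy hne ⊢
  have hx0 : (0:ℝ) < x := hx.1
  have hx1 : x < 1 := hx.2
  have hy0 : (0:ℝ) < y := hy.1
  have hy1 : y < 1 := hy.2
  have hax : 0 < Real.sqrt x := Real.sqrt_pos.2 hx0
  have hbx : 0 < Real.sqrt (1 - x) := Real.sqrt_pos.2 (by linarith)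
  have hay : 0 < Real.sqrt y := Real.sqrt_pos.2 hy0
  have hby : 0 < Real.sqrt (1 - y) := Real.sqrt_pos.2 (by linarith)
  have hsqy : Real.sqrt (y * (1 - y)) = Real.sqrt y * Real.sqrt (1 - y) :=
    Real.sqrt_mul hy0.le _
  have hπ : Real.pi ≠ 0 := Real.pi_ne_zero
  have hsqx : Real.sqrt (x * (1 - x)) = Real.sqrt x * Real.sqrt (1 - x) :=
    Real.sqrt_mul hx0.le _
  -- derivative of sqrt(1-x)
  have hsub : HasDerivAt (fun t : ℝ => 1 - t) (-1) x := by
    simpa using (hasDerivAt_id x).const_sub 1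
  have hsq1x : HasDerivAt (fun t : ℝ => Real.sqrt (1 - t))
      (1 / (2 * Real.sqrt (1 - x)) * (-1)) x :=
    (Real.hasDerivAt_sqrt (ne_of_gt (by linarith : (0:ℝ) < 1 - x))).comp x hsub
  have hdg₀ : deriv g₀ x = 1 / (4 * Real.sqrt (1 - x)) := by
    rw [hG₀]
    have h := (hsq1x.const_sub 1).div_const 2
    have : HasDerivAt (fun t : ℝ => (1 - Real.sqrt (1 - t)) / 2)
        (1 / (4 * Real.sqrt (1 - x))) x := by
      refine h.congr_deriv ?_
      field_simp
      ring
    exact this.deriv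
  have hdg₁ : deriv g₁ x = 1 / (4 * Real.sqrt x) := by
    rw [hG₁]
    have h := ((Real.hasDerivAt_sqrt hx0.ne').const_add 1).div_const 2
    have : HasDerivAt (fun t : ℝ => (1 + Real.sqrt t) / 2)
        (1 / (4 * Real.sqrt x)) x := by
      refine h.congr_deriv ?_
      field_simp
      ring
    exact this.deriv
  have hdf₀ : deriv f₀ y = 4 - 8 * y := by
    rw [hF₀]
    have h := ((hasDerivAt_id y).const_mul (4:ℝ)).mul ((hasDerivAt_id y).const_sub 1)
    simp only [id_eq] at h
    have : HasDerivAt (fun t : ℝ => 4 * t * (1 - t)) (4 - 8 * y) y := by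
      refine h.congr_deriv ?_
      ring
    exact this.deriv
  have hdf₁ : deriv f₁ y = 8 * y - 4 := by
    rw [hF₁]
    have h := (((hasDerivAt_id y).const_mul (2:ℝ)).sub_const 1).pow 2
    simp only [id_eq] at h
    have : HasDerivAt (fun t : ℝ => (2 * t - 1) ^ 2) (8 * y - 4) y := by
      refine h.congr_deriv ?_
      ring
    exact this.deriv
  constructor
  · intro hlt
    have h2y : 0 ≤ 1 - 2 * y := by linarith
    have h2y' : (0:ℝ) < 1 - 2 * y := by
      rcases lt_or_eq_of_le h2y with h | h
      · exact h
      · exact absurd (by linarith : y = 1/2) hne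
    -- ζ(g₀ x)
    have e1 : g₀ x * (1 - g₀ x) = x / 4 := by
      have hs : Real.sqrt (1 - x) ^ 2 = 1 - x := Real.sq_sqrt (by linarith)
      rw [hg₀]; nlinarith [hs]
    have e1' : Real.sqrt (g₀ x * (1 - g₀ x)) = Real.sqrt x / 2 := by
      rw [e1, show x / 4 = x * (1/2)^2 by ring, Real.sqrt_mul hx0.le,
        Real.sqrt_sq (by norm_num : (0:ℝ) ≤ 1/2)]
      ring
    -- ζ(f₀ y)
    have e2 : f₀ y * (1 - f₀ y) = (y * (1 - y)) * (2 * (1 - 2 * y))^2 := by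
      rw [hf₀]; ring
    have e2' : Real.sqrt (f₀ y * (1 - f₀ y))
        = Real.sqrt (y * (1 - y)) * (2 * (1 - 2 * y)) := by
      rw [e2, Real.sqrt_mul (by nlinarith) _,
        Real.sqrt_sq (by linarith : (0:ℝ) ≤ 2 * (1 - 2 * y))]
    rw [hρ, hρ]
    simp only [hζ, hdg₀, hdf₀, e1', e2', hsqx, hsqy]
    have hne1 : (1:ℝ) - 2 * y ≠ 0 := ne_of_gt h2y'
    field_simp [hπ, hax.ne', hbx.ne', hay.ne', hby.ne', hne1]
    rw [eq_div_iff (by contrapose! hne1; linarith)]; ring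
  · intro hge
    have h2y' : (0:ℝ) < 2 * y - 1 := by
      rcases lt_or_eq_of_le hge with h | h
      · linarith
      · exact absurd h.symm hne
    have e1 : g₁ x * (1 - g₁ x) = (1 - x) / 4 := by
      have hs : Real.sqrt x ^ 2 = x := Real.sq_sqrt hx0.le
      rw [hg₁]; nlinarith [hs]
    have e1' : Real.sqrt (g₁ x * (1 - g₁ x)) = Real.sqrt (1 - x) / 2 := by
      rw [e1, show (1 - x) / 4 = (1 - x) * (1/2)^2 by ring,
        Real.sqrt_mul (by linarith : (0:ℝ) ≤ 1 - x),
        Real.sqrt_sq (by norm_num : (0:ℝ) ≤ 1/2)]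
      ring
    have e2 : f₁ y * (1 - f₁ y) = (y * (1 - y)) * (2 * (2 * y - 1))^2 := by
      rw [hf₁]; ring
    have e2' : Real.sqrt (f₁ y * (1 - f₁ y))
        = Real.sqrt (y * (1 - y)) * (2 * (2 * y - 1)) := by
      rw [e2, Real.sqrt_mul (by nlinarith) _,
        Real.sqrt_sq (by linarith : (0:ℝ) ≤ 2 * (2 * y - 1))]
    rw [hρ, hρ]
    simp only [hζ, hdg₁, hdf₁, e1', e2', hsqx, hsqy]
    have hne1 : 2 * y - 1 ≠ 0 := ne_of_gt h2y'
    field_simp [hπ, hax.ne', hbx.ne', hay.ne', hby.ne', hne1]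
    rw [eq_div_iff (by contrapose! hne1; linarith)]; ring
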